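/- arXiv:2204.05664 — 2 statements merged into one kernel-verified Lean document; each statement's English description precedes it below -/
import Mathlib

section
/- The signed Roman domination number of the Kneser graph K_{9,2} equals 3, i.e. γ_sR(K_{9,2}) = 3. -/
def kneserGraph (n k : ℕ) : SimpleGraph {s : Finset (Fin n) // s.card = k} where
  Adj a b := a ≠ b ∧ Disjoint a.1 b.1
  symm := ⟨fun a b h => ⟨h.1.symm, h.2.symm⟩⟩
  loopless := ⟨fun a h => h.1 rfl⟩

def IsRDF {V : Type*} (G : SimpleGraph V) (f : V → ℕ) : Prop :=
  (∀ v, f v ≤ 2) ∧ ∀ v, f v = 0 → ∃ u, G.Adj v u ∧ f u = 2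

noncomputable def romanDomNum {V : Type*} [Fintype V] (G : SimpleGraph V) : ℕ :=
  sInf {w | ∃ f, IsRDF G f ∧ ∑ v, f v = w}

open Classical in
def IsTRDF {V : Type*} [Fintype V] (G : SimpleGraph V) (f : V → ℕ) : Prop :=
  IsRDF G f ∧ ∀ v, 1 ≤ ∑ u ∈ Finset.univ.filter (fun u => G.Adj v u), f u

noncomputable def totalRomanDomNum {V : Type*} [Fintype V] (G : SimpleGraph V) : ℕ :=
  sInf {w | ∃ f, IsTRDF G f ∧ ∑ v, f v = w}

open Classical in
def IsSRDF {V : Type*} [Fintype V] (G : SimpleGraph V) (f : V → ℤ) : Prop :=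
  (∀ v, f v = -1 ∨ f v = 1 ∨ f v = 2) ∧
  (∀ v, f v = -1 → ∃ u, G.Adj v u ∧ f u = 2) ∧
  (∀ v, 1 ≤ f v + ∑ u ∈ Finset.univ.filter (fun u => G.Adj v u), f u)

noncomputable def signedRomanDomNum {V : Type*} [Fintype V] (G : SimpleGraph V) : ℤ :=
  sInf {w | ∃ f, IsSRDF G f ∧ ∑ v, f v = w}

def IsDominatingSet {V : Type*} (G : SimpleGraph V) (S : Finset V) : Prop :=
  ∀ v, v ∉ S → ∃ u ∈ S, G.Adj v u

noncomputable def domNum {V : Type*} [Fintype V] (G : SimpleGraph V) : ℕ :=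
  sInf {m | ∃ S : Finset V, IsDominatingSet G S ∧ S.card = m}



set_option linter.unusedVariables false

abbrev K92 := {s : Finset (Fin 9) // s.card = 2}

noncomputable def Sd (f : K92 → ℤ) (a : Fin 9) : ℤ := ∑ v : K92, if a ∈ v.1 then f v else 0

lemma sum_Sd (f : K92 → ℤ) : ∑ a, Sd f a = 2 * ∑ v, f v := by
  unfold Sd
  rw [Finset.sum_comm, Finset.mul_sum]
  refine Finset.sum_congr rfl fun v _ => ?_
  rw [Finset.sum_ite_mem, Finset.univ_inter, Finset.sum_const, v.2]
  ring

def pr (a b : Fin 9) : K92 := if h : a = b then ⟨{0, 1}, by decide⟩ else ⟨{a, b}, Finset.card_pair h⟩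

lemma pr_fst {a b : Fin 9} (h : a ≠ b) : (pr a b).1 = {a, b} := by
  unfold pr; rw [dif_neg h]

lemma key (f : K92 → ℤ) (hf : IsSRDF (kneserGraph 9 2) f) {a b : Fin 9} (hab : a ≠ b) :
    Sd f a + Sd f b ≤ (∑ v, f v) - 1 + 2 * f (pr a b) := by
  classical
  set v : K92 := pr a b with hv
  have hv1 : v.1 = {a, b} := pr_fst hab
  have pointwise : ∀ u : K92, f u =
      (if (kneserGraph 9 2).Adj v u then f u else 0) +
      ((if a ∈ u.1 then f u else 0) + (if b ∈ u.1 then f u else 0)) -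
      (if u = v then f u else 0) := by
    intro u
    by_cases hau : a ∈ u.1 <;> by_cases hbu : b ∈ u.1
    · have huv : u = v := by
        apply Subtype.ext
        apply (Finset.eq_of_subset_of_card_le ?_ ?_).symm
        · rw [hv1]; intro x hx
          simp only [Finset.mem_insert, Finset.mem_singleton] at hx
          rcases hx with h | h <;> simp [h, hau, hbu]
        · rw [u.2, v.2]
      have hadj : ¬ (kneserGraph 9 2).Adj v u := by
        intro h; exact h.1 huv.symm
      simp only [huv, hadj, if_false, if_pos, hau, hbu, hv1, if_true]
      simp
    · have huv : u ≠ v := by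
        intro h; rw [h, hv1] at hbu; simp at hbu
      have hadj : ¬ (kneserGraph 9 2).Adj v u := by
        rintro ⟨-, hd⟩
        exact (Finset.disjoint_left.mp hd (by rw [hv1]; simp)) hau
      simp [hau, hbu, huv, hadj]
    · have huv : u ≠ v := by
        intro h; rw [h, hv1] at hau; simp at hau
      have hadj : ¬ (kneserGraph 9 2).Adj v u := by
        rintro ⟨-, hd⟩
        exact (Finset.disjoint_left.mp hd (by rw [hv1]; simp [hab])) hbu
      simp [hau, hbu, huv, hadj]
    · have huv : u ≠ v := by
        intro h; rw [h, hv1] at hau; simp at hau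
      have hadj : (kneserGraph 9 2).Adj v u := by
        refine ⟨fun h => huv h.symm, ?_⟩
        rw [hv1, Finset.disjoint_left]
        intro x hx
        simp only [Finset.mem_insert, Finset.mem_singleton] at hx
        rcases hx with h | h <;> simp [h, hau, hbu]
      simp [hau, hbu, huv, hadj]
  have hsum : ∑ u, f u =
      (∑ u ∈ Finset.univ.filter (fun u => (kneserGraph 9 2).Adj v u), f u) +
      (Sd f a + Sd f b) - f v := by
    calc ∑ u, f u = ∑ u : K92,
        ((if (kneserGraph 9 2).Adj v u then f u else 0) +
        ((if a ∈ u.1 then f u else 0) + (if b ∈ u.1 then f u else 0)) -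
        (if u = v then f u else 0)) := Finset.sum_congr rfl fun u _ => pointwise u
      _ = _ := by
        rw [Finset.sum_sub_distrib, Finset.sum_add_distrib, Finset.sum_add_distrib]
        rw [Finset.sum_ite_eq' Finset.univ v f]
        simp [Finset.sum_filter, Sd]
  have h3 := hf.2.2 v
  rw [Finset.filter_congr_decidable] at h3
  rw [hsum] at *
  linarith [h3]

lemma Sd_eq_sum_erase (f : K92 → ℤ) (a : Fin 9) :
    Sd f a = ∑ b ∈ Finset.univ.erase a, f (pr a b) := by
  classical
  have : Sd f a = ∑ v ∈ Finset.univ.filter (fun v : K92 => a ∈ v.1), f v := by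
    simp [Sd, Finset.sum_filter]
  rw [this]
  refine (Finset.sum_bij (fun b _ => pr a b) ?_ ?_ ?_ ?_).symm
  · intro b hb
    have hab : a ≠ b := (Finset.ne_of_mem_erase hb).symm
    simp [pr_fst hab]
  · intro b hb b' hb' heq
    have hab : a ≠ b := (Finset.ne_of_mem_erase hb).symm
    have hab' : a ≠ b' := (Finset.ne_of_mem_erase hb').symm
    have heq' : pr a b = pr a b' := heq
    have : ({a, b} : Finset (Fin 9)) = {a, b'} := by
      rw [← pr_fst hab, ← pr_fst hab', heq']
    have hb2 : b ∈ ({a, b'} : Finset (Fin 9)) := by rw [← this]; simp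
    simp only [Finset.mem_insert, Finset.mem_singleton] at hb2
    rcases hb2 with h | h
    · exact absurd h.symm hab
    · exact h
  · intro v hv
    simp only [Finset.mem_filter, Finset.mem_univ, true_and] at hv
    obtain ⟨x, y, hxy, hvxy⟩ := Finset.card_eq_two.mp v.2
    have hav : a = x ∨ a = y := by
      have := hv; rw [hvxy] at this
      simpa using this
    rcases hav with rfl | rfl
    · refine ⟨y, by simp [Finset.mem_erase, hxy.symm], ?_⟩
      exact Subtype.ext (by rw [pr_fst hxy, hvxy])
    · refine ⟨x, by simp [Finset.mem_erase, hxy], ?_⟩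
      exact Subtype.ext (by rw [pr_fst hxy.symm, hvxy, Finset.pair_comm])
  · intro b hb; rfl

lemma lower_bound (f : K92 → ℤ) (hf : IsSRDF (kneserGraph 9 2) f) : 3 ≤ ∑ v, f v := by
  classical
  obtain ⟨a, -, hmax⟩ := Finset.exists_max_image Finset.univ (Sd f) Finset.univ_nonempty
  set w : ℤ := ∑ v, f v with hw
  have h2w : ∑ b, Sd f b = 2 * w := sum_Sd f
  have h9 : 2 * w ≤ 9 * Sd f a := by
    rw [← h2w]
    calc ∑ b, Sd f b ≤ ∑ _b : Fin 9, Sd f a :=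
          Finset.sum_le_sum fun b _ => hmax b (Finset.mem_univ b)
      _ = 9 * Sd f a := by simp [Finset.sum_const, Finset.card_univ, mul_comm]
  have herase : ∀ b ∈ Finset.univ.erase a, Sd f a + Sd f b ≤ w - 1 + 2 * f (pr a b) := by
    intro b hb
    exact key f hf ((Finset.ne_of_mem_erase hb).symm)
  have hsum := Finset.sum_le_sum herase
  have hcard : (Finset.univ.erase a).card = 8 := by
    rw [Finset.card_erase_of_mem (Finset.mem_univ a), Finset.card_univ]; rfl
  have hL : ∑ b ∈ Finset.univ.erase a, (Sd f a + Sd f b) = 8 * Sd f a + (2 * w - Sd f a) := by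
    rw [Finset.sum_add_distrib, Finset.sum_const, hcard]
    have := Finset.add_sum_erase Finset.univ (Sd f) (Finset.mem_univ a)
    rw [h2w] at this
    simp only [nsmul_eq_mul]
    push_cast
    linarith [this]
  have hR : ∑ b ∈ Finset.univ.erase a, (w - 1 + 2 * f (pr a b))
      = 8 * (w - 1) + 2 * Sd f a := by
    rw [Finset.sum_add_distrib, Finset.sum_const, hcard, ← Finset.mul_sum,
      ← Sd_eq_sum_erase]
    push_cast
    ring
  rw [hL, hR] at hsum
  by_cases hw2 : w = 2
  · rw [hw2] at h9 hsum ⊢; omega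
  · omega


def Fwit : K92 → ℤ := fun v =>
  if (v.1.filter (fun x => 5 < x.val)).card = 0 then 1
  else if (v.1.filter (fun x => 5 < x.val)).card = 2 then 2 else -1

instance : DecidableRel (kneserGraph 9 2).Adj := fun a b => by
  unfold kneserGraph; exact instDecidableAnd

lemma mem_wit : (3 : ℤ) ∈ {w : ℤ | ∃ f, IsSRDF (kneserGraph 9 2) f ∧ ∑ v, f v = w} := by
  refine ⟨Fwit, ⟨?_, ?_, ?_⟩, ?_⟩
  · decide
  · decide
  · intro v
    rw [Finset.filter_congr_decidable]
    revert v
    decide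
  · decide

theorem kneser92_signedRomanDomNum : signedRomanDomNum (kneserGraph 9 2) = 3 := by
  have hlb : ∀ w ∈ {w : ℤ | ∃ f, IsSRDF (kneserGraph 9 2) f ∧ ∑ v, f v = w}, 3 ≤ w := by
    rintro w ⟨f, hf, rfl⟩
    exact lower_bound f hf
  exact le_antisymm (csInf_le ⟨3, hlb⟩ mem_wit) (le_csInf ⟨3, mem_wit⟩ hlb)
end

section
/- The signed Roman domination number of the Kneser graph K_{10,2} equals 4, i.e. γ_sR(K_{10,2}) = 4. -/
-- ===== auxiliary material =====

instance kadj (n k : ℕ) : DecidableRel (kneserGraph n k).Adj :=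
  fun a b => inferInstanceAs (Decidable (a ≠ b ∧ Disjoint a.1 b.1))

abbrev KV := {s : Finset (Fin 10) // s.card = 2}

open Finset

/-- explicit weight-4 signed Roman dominating function -/
lemma filter_swap (v : KV)
    (h : DecidablePred fun u : KV => (kneserGraph 10 2).Adj v u) :
    @Finset.filter KV (fun u => (kneserGraph 10 2).Adj v u) h Finset.univ
    = @Finset.filter KV (fun u => (kneserGraph 10 2).Adj v u) (fun u => kadj 10 2 v u)
      Finset.univ := by
  congr 1

def f0 (v : KV) : ℤ :=
  let c := (v.1.filter (fun x => x.val ≤ 5)).card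
  let same := (v.1.image (fun x => x.val / 2)).card = 1
  if c = 2 then (if same then 2 else 1)
  else if c = 0 then (if same then 1 else 2)
  else -1

def Fv (f : KV → ℤ) (i j : Fin 10) : ℤ :=
  if h : ({i,j} : Finset (Fin 10)).card = 2 then f ⟨{i,j}, h⟩ else 0

def sv (f : KV → ℤ) (i : Fin 10) : ℤ := ∑ v : KV, if i ∈ v.1 then f v else 0

def vtx (i j : Fin 10) (h : i ≠ j) : KV := ⟨{i,j}, Finset.card_pair h⟩

lemma Fv_eq (f : KV → ℤ) {i j : Fin 10} (h : i ≠ j) : Fv f i j = f (vtx i j h) :=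
  dif_pos _

-- bridge
lemma sv_eq_sum (f : KV → ℤ) (i : Fin 10) :
    sv f i = ∑ j ∈ univ.erase i, Fv f i j := by
  rw [sv, ← Finset.sum_filter]
  refine (Finset.sum_bij (fun j hj => vtx i j (Ne.symm (Finset.mem_erase.1 hj).1)) ?_ ?_ ?_ ?_).symm
  · intro j hj
    simp [vtx]
  · intro j1 h1 j2 h2 heq
    have h1' := (Finset.mem_erase.1 h1).1
    have : ({i, j1} : Finset (Fin 10)) = {i, j2} := congrArg Subtype.val heq
    have hj1 : j1 ∈ ({i, j2} : Finset (Fin 10)) := by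
      rw [← this]; simp
    simp only [Finset.mem_insert, Finset.mem_singleton] at hj1
    tauto
  · intro v hv
    simp only [Finset.mem_filter, Finset.mem_univ, true_and] at hv
    obtain ⟨a, b, hab, hv2⟩ := Finset.card_eq_two.1 v.2
    have hiv : i ∈ v.1 := hv
    rw [hv2] at hiv
    simp only [Finset.mem_insert, Finset.mem_singleton] at hiv
    rcases hiv with rfl | rfl
    · exact ⟨b, by simp [Finset.mem_erase, hab.symm], Subtype.ext (by simp [vtx, hv2])⟩
    · exact ⟨a, by simp [Finset.mem_erase, hab], Subtype.ext (by simp [vtx, hv2, Finset.pair_comm])⟩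
  · intro j hj
    rw [Fv_eq f (Ne.symm (Finset.mem_erase.1 hj).1)]

lemma sv_total (f : KV → ℤ) : ∑ i : Fin 10, sv f i = 2 * ∑ v : KV, f v := by
  rw [Finset.mul_sum]
  unfold sv
  rw [Finset.sum_comm]
  refine Finset.sum_congr rfl (fun v _ => ?_)
  rw [Finset.sum_ite_mem, Finset.univ_inter, Finset.sum_const, v.2]
  push_cast; ring

lemma key_ineq (f : KV → ℤ)
    (h3 : ∀ v : KV, 1 ≤ f v + ∑ u : KV, if (kneserGraph 10 2).Adj v u then f u else 0)
    {i j : Fin 10} (hij : i ≠ j) :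
    sv f i + sv f j ≤ (∑ v : KV, f v) - 1 + 2 * Fv f i j := by
  set v := vtx i j hij with hv
  have hvmem : v.1 = ({i, j} : Finset (Fin 10)) := rfl
  have key : ∀ u : KV, i ∈ u.1 → j ∈ u.1 → u = v := by
    intro u hiu hju
    have hsub : ({i, j} : Finset (Fin 10)) ⊆ u.1 := by
      intro x hx; simp only [Finset.mem_insert, Finset.mem_singleton] at hx
      rcases hx with rfl | rfl <;> assumption
    have : ({i, j} : Finset (Fin 10)) = u.1 :=
      Finset.eq_of_subset_of_card_le hsub (by rw [u.2, Finset.card_pair hij])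
    exact Subtype.ext this.symm
  have pointwise : ∀ u : KV,
      (if (kneserGraph 10 2).Adj v u then (0:ℤ) else f u)
      = (if i ∈ u.1 then f u else 0) + (if j ∈ u.1 then f u else 0)
        - (if u = v then f u else 0) := by
    intro u
    by_cases hadj : (kneserGraph 10 2).Adj v u
    · have hi : i ∉ u.1 := fun h => Finset.disjoint_left.1 hadj.2 (by simp [hvmem]) h
      have hj : j ∉ u.1 := fun h => Finset.disjoint_left.1 hadj.2 (by simp [hvmem]) h
      have huv : u ≠ v := fun h => hadj.1 h.symm
      simp [hadj, hi, hj, huv]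
    · have hnadj : v = u ∨ ¬ Disjoint v.1 u.1 := by
        by_contra hc; push_neg at hc; exact hadj ⟨hc.1, hc.2⟩
      rcases hnadj with heq | hnd
      · simp only [hadj, if_false, ← heq, hvmem]
        simp
      · have : i ∈ u.1 ∨ j ∈ u.1 := by
          rw [Finset.not_disjoint_iff] at hnd
          obtain ⟨x, hxv, hxu⟩ := hnd
          rw [hvmem] at hxv
          simp only [Finset.mem_insert, Finset.mem_singleton] at hxv
          rcases hxv with rfl | rfl
          · exact Or.inl hxu
          · exact Or.inr hxu
        by_cases hiu : i ∈ u.1 <;> by_cases hju : j ∈ u.1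
        · have := key u hiu hju
          simp only [hadj, if_false, this, hvmem, if_true]
          simp
        · have huv : u ≠ v := fun h => hju (by rw [h, hvmem]; simp)
          simp [hadj, hiu, hju, huv]
        · have huv : u ≠ v := fun h => hiu (by rw [h, hvmem]; simp)
          simp [hadj, hiu, hju, huv]
        · tauto
  have hsplit : ∀ u : KV, f u = (if (kneserGraph 10 2).Adj v u then f u else 0)
      + (if (kneserGraph 10 2).Adj v u then (0:ℤ) else f u) := by
    intro u; by_cases h : (kneserGraph 10 2).Adj v u <;> simp [h]
  have htot : ∑ u : KV, f u
      = (∑ u : KV, if (kneserGraph 10 2).Adj v u then f u else 0)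
        + (sv f i + sv f j - f v) := by
    calc ∑ u : KV, f u
        = ∑ u : KV, ((if (kneserGraph 10 2).Adj v u then f u else 0)
            + (if (kneserGraph 10 2).Adj v u then (0:ℤ) else f u)) :=
          Finset.sum_congr rfl (fun u _ => hsplit u)
      _ = (∑ u : KV, if (kneserGraph 10 2).Adj v u then f u else 0)
            + ∑ u : KV, (if (kneserGraph 10 2).Adj v u then (0:ℤ) else f u) :=
          Finset.sum_add_distrib
      _ = _ := by
          congr 1
          calc ∑ u : KV, (if (kneserGraph 10 2).Adj v u then (0:ℤ) else f u)
              = ∑ u : KV, ((if i ∈ u.1 then f u else 0) + (if j ∈ u.1 then f u else 0)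
                  - (if u = v then f u else 0)) :=
                Finset.sum_congr rfl (fun u _ => pointwise u)
            _ = sv f i + sv f j - f v := by
                rw [Finset.sum_sub_distrib, Finset.sum_add_distrib]
                rw [Finset.sum_ite_eq' Finset.univ v f]
                simp [sv]
  have h3v := h3 v
  rw [Fv_eq f hij, ← hv]
  omega

lemma Fv_range (f : KV → ℤ) (h1 : ∀ v : KV, f v = -1 ∨ f v = 1 ∨ f v = 2)
    {i j : Fin 10} (hij : i ≠ j) :
    Fv f i j = -1 ∨ Fv f i j = 1 ∨ Fv f i j = 2 := by
  rw [Fv, dif_pos (Finset.card_pair hij)]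
  exact h1 _

lemma deg_bound (f : KV → ℤ)
    (h3 : ∀ v : KV, 1 ≤ f v + ∑ u : KV, if (kneserGraph 10 2).Adj v u then f u else 0)
    (i : Fin 10) : 6 * sv f i ≤ 7 * (∑ v : KV, f v) - 9 := by
  have hsum : ∑ j ∈ univ.erase i, (sv f i + sv f j)
      ≤ ∑ j ∈ univ.erase i, ((∑ v : KV, f v) - 1 + 2 * Fv f i j) := by
    refine Finset.sum_le_sum (fun j hj => ?_)
    have hij : i ≠ j := Ne.symm (Finset.mem_erase.1 hj).1
    exact key_ineq f h3 hij
  have hcard : (univ.erase i).card = 9 := by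
    rw [Finset.card_erase_of_mem (Finset.mem_univ i)]
    simp
  have hL : ∑ j ∈ univ.erase i, (sv f i + sv f j)
      = 9 * sv f i + (2 * (∑ v : KV, f v) - sv f i) := by
    rw [Finset.sum_add_distrib, Finset.sum_const, hcard]
    have h9 : ∑ j ∈ univ.erase i, sv f j = 2 * (∑ v : KV, f v) - sv f i := by
      have h := Finset.sum_erase_add univ (sv f) (Finset.mem_univ i)
      rw [sv_total f] at h
      omega
    rw [h9]; push_cast; ring
  have hR : ∑ j ∈ univ.erase i, ((∑ v : KV, f v) - 1 + 2 * Fv f i j)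
      = 9 * ((∑ v : KV, f v) - 1) + 2 * sv f i := by
    rw [Finset.sum_add_distrib, Finset.sum_const, hcard, ← Finset.mul_sum, ← sv_eq_sum]
    push_cast; ring
  rw [hL, hR] at hsum
  omega

lemma lower_bound_s11 (f : KV → ℤ)
    (h1 : ∀ v : KV, f v = -1 ∨ f v = 1 ∨ f v = 2)
    (h3 : ∀ v : KV, 1 ≤ f v + ∑ u : KV, if (kneserGraph 10 2).Adj v u then f u else 0) : 4 ≤ ∑ v : KV, f v := by
  -- W ≥ 2
  have hWs : ∑ i : Fin 10, sv f i = 2 * ∑ v : KV, f v := sv_total f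
  have hWsum : ∑ i : Fin 10, (6 * sv f i) ≤ ∑ _i : Fin 10, (7 * (∑ v : KV, f v) - 9) :=
    Finset.sum_le_sum (fun i _ => deg_bound f h3 i)
  rw [← Finset.mul_sum, hWs, Finset.sum_const, Finset.card_univ, Fintype.card_fin,
    nsmul_eq_mul] at hWsum
  push_cast at hWsum
  by_contra hlt
  push_neg at hlt
  rcases (by omega : ∑ v : KV, f v = 2 ∨ ∑ v : KV, f v = 3) with hw | hw
  -- case W = 2
  · have hs : ∀ i : Fin 10, sv f i ≤ 0 := by
      intro i; have := deg_bound f h3 i; omega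
    have hnp : ∑ i : Fin 10, sv f i ≤ 0 :=
      Finset.sum_nonpos (fun i _ => by show sv f i ≤ 0; exact hs i)
    omega
  -- case W = 3
  · have hs2 : ∀ i : Fin 10, sv f i ≤ 2 := by
      intro i; have := deg_bound f h3 i; omega
    set P := univ.filter (fun i : Fin 10 => 1 ≤ sv f i) with hP
    set Q := univ.filter (fun i : Fin 10 => sv f i ≤ -1) with hQ
    have hPQdisj : Disjoint P Q := by
      rw [Finset.disjoint_left]
      intro a haP haQ
      simp only [hP, hQ, Finset.mem_filter] at haP haQ
      omega
    have hsplit : ∑ i ∈ P, sv f i + ∑ i ∈ Q, sv f i = 6 := by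
      have htot : ∑ i ∈ P, sv f i + ∑ i ∈ univ.filter (fun i => ¬ 1 ≤ sv f i), sv f i = 6 := by
        rw [Finset.sum_filter_add_sum_filter_not, hWs, hw]
        norm_num
      have hQsub : Q ⊆ univ.filter (fun i => ¬ 1 ≤ sv f i) := by
        intro a ha
        simp only [hQ, Finset.mem_filter] at ha
        simp only [Finset.mem_filter]
        exact ⟨ha.1, by omega⟩
      have heq : ∑ i ∈ univ.filter (fun i => ¬ 1 ≤ sv f i), sv f i = ∑ i ∈ Q, sv f i := by
        refine (Finset.sum_subset hQsub (fun x hx hxQ => ?_)).symm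
        simp only [Finset.mem_filter] at hx
        have hx2 : ¬ sv f x ≤ -1 := fun hc => hxQ (by simp only [hQ, Finset.mem_filter]; exact ⟨Finset.mem_univ x, hc⟩)
        show sv f x = 0
        omega
      omega
    have hQneg : ∀ j ∈ Q, sv f j ≤ -1 := by
      intro j hj
      have := (Finset.mem_filter.1 hj).2
      simpa using this
    have hPpos : P.Nonempty := by
      rcases Finset.eq_empty_or_nonempty P with hPe | h
      · exfalso
        rw [hPe, Finset.sum_empty] at hsplit
        have : ∑ i ∈ Q, sv f i ≤ 0 :=
          Finset.sum_nonpos (fun j hj => by show sv f j ≤ 0; have := hQneg j hj; omega)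
        omega
      · exact h
    obtain ⟨im, himP, hmax⟩ := Finset.exists_max_image P (sv f) hPpos
    have hM1 : 1 ≤ sv f im := by
      have := (Finset.mem_filter.1 himP).2
      simpa using this
    have hM2 : sv f im ≤ 2 := hs2 im
    set T := (univ.erase im).filter (fun j => Fv f im j = -1) with hT
    have hTQ : ∀ j ∈ T, sv f j ≤ -(sv f im) := by
      intro j hj
      simp only [hT, Finset.mem_filter, Finset.mem_erase] at hj
      have hij : im ≠ j := Ne.symm hj.1.1
      have hk := key_ineq f h3 hij
      rw [hj.2, hw] at hk
      omega
    have hTsubQ : T ⊆ Q := by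
      intro j hj
      have := hTQ j hj
      simp only [hQ, Finset.mem_filter]
      exact ⟨Finset.mem_univ j, by omega⟩
    have hcard9 : (univ.erase im).card = 9 := by
      rw [Finset.card_erase_of_mem (Finset.mem_univ im)]; simp
    -- sv im ≥ 9 - 2|T|
    have hsT : 9 - 2 * (T.card : ℤ) ≤ sv f im := by
      have hsplit2 : ∑ j ∈ T, Fv f im j
          + ∑ j ∈ (univ.erase im).filter (fun j => ¬ Fv f im j = -1), Fv f im j = sv f im := by
        rw [hT, Finset.sum_filter_add_sum_filter_not, ← sv_eq_sum]
      have hTsum : ∑ j ∈ T, Fv f im j = -(T.card : ℤ) := by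
        rw [Finset.sum_congr rfl (fun j hj => (Finset.mem_filter.1 hj).2)]
        simp [hT]
      have hRest : ((univ.erase im).filter (fun j => ¬ Fv f im j = -1)).card • (1:ℤ)
          ≤ ∑ j ∈ (univ.erase im).filter (fun j => ¬ Fv f im j = -1), Fv f im j := by
        refine Finset.card_nsmul_le_sum _ _ _ (fun j hj => ?_)
        simp only [Finset.mem_filter, Finset.mem_erase] at hj
        have hij : im ≠ j := Ne.symm hj.1.1
        show (1:ℤ) ≤ Fv f im j
        rcases Fv_range f h1 hij with h | h | h <;> omega
      have hcards : T.card + ((univ.erase im).filter (fun j => ¬ Fv f im j = -1)).card = 9 := by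
        rw [hT, Finset.card_filter_add_card_filter_not, hcard9]
      rw [nsmul_eq_mul, mul_one] at hRest
      omega
    have hT4 : 4 ≤ (T.card : ℤ) := by omega
    -- sums over Q
    have hQT : ∑ j ∈ Q, (-(sv f j)) = ∑ j ∈ Q \ T, (-(sv f j)) + ∑ j ∈ T, (-(sv f j)) :=
      (Finset.sum_sdiff hTsubQ).symm
    have hTsum2 : (T.card : ℤ) * sv f im ≤ ∑ j ∈ T, (-(sv f j)) := by
      have h := Finset.card_nsmul_le_sum T (fun j => -(sv f j)) (sv f im)
        (fun j hj => by show sv f im ≤ -(sv f j); have := hTQ j hj; omega)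
      rwa [nsmul_eq_mul] at h
    have hQTsum : ((Q \ T).card : ℤ) * 1 ≤ ∑ j ∈ Q \ T, (-(sv f j)) := by
      have h := Finset.card_nsmul_le_sum (Q \ T) (fun j => -(sv f j)) 1
        (fun j hj => by show (1:ℤ) ≤ -(sv f j); have := hQneg j (Finset.mem_sdiff.1 hj).1; omega)
      rwa [nsmul_eq_mul] at h
    have hcardQT : ((Q \ T).card : ℤ) = (Q.card : ℤ) - (T.card : ℤ) := by
      have hcc := Finset.card_sdiff_of_subset hTsubQ
      have hle := Finset.card_le_card hTsubQ
      omega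
    -- sum over P
    have hPsum : ∑ i ∈ P, sv f i ≤ (P.card : ℤ) * sv f im := by
      have h := Finset.sum_le_card_nsmul P (sv f) (sv f im)
        (fun i hi => by show sv f i ≤ sv f im; exact hmax i hi)
      rwa [nsmul_eq_mul] at h
    have hcardPQ : (P.card : ℤ) + (Q.card : ℤ) ≤ 10 := by
      have h1' : (P ∪ Q).card = P.card + Q.card := Finset.card_union_of_disjoint hPQdisj
      have h2' : (P ∪ Q).card ≤ 10 := by
        have := Finset.card_le_univ (P ∪ Q)
        simpa using this
      omega
    have hTQcard : (T.card : ℤ) ≤ (Q.card : ℤ) := by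
      have := Finset.card_le_card hTsubQ; omega
    have hQsv : ∑ j ∈ Q, (-(sv f j)) = - ∑ j ∈ Q, sv f j := by
      rw [Finset.sum_neg_distrib]
    rcases (by omega : sv f im = 1 ∨ sv f im = 2) with hM' | hM' <;>
      rw [hM'] at hTsum2 hPsum <;> omega

set_option maxRecDepth 1000000 in
lemma f0_sum : ∑ v : KV, f0 v = 4 := by decide

set_option maxRecDepth 1000000 in
lemma f0_cond1 : ∀ v : KV, f0 v = -1 ∨ f0 v = 1 ∨ f0 v = 2 := by decide

set_option maxRecDepth 1000000 in
lemma f0_cond2 : ∀ v : KV, f0 v = -1 → ∃ u, (kneserGraph 10 2).Adj v u ∧ f0 u = 2 := by decide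

set_option maxRecDepth 1000000 in
lemma f0_cond3 : ∀ v : KV, 1 ≤ f0 v + ∑ u : KV, if (kneserGraph 10 2).Adj v u then f0 u else 0 := by
  decide

theorem kneser102_signedRomanDomNum : signedRomanDomNum (kneserGraph 10 2) = 4 := by
  refine IsLeast.csInf_eq ⟨⟨f0, ?_, f0_sum⟩, ?_⟩
  · unfold IsSRDF
    refine ⟨f0_cond1, f0_cond2, ?_⟩
    intro v
    rw [filter_swap, Finset.sum_filter]
    exact f0_cond3 v
  · rintro w ⟨f, hf, rfl⟩
    unfold IsSRDF at hf
    obtain ⟨hf1, hf2, hf3⟩ := hf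
    refine lower_bound_s11 f hf1 (fun v => ?_)
    have := hf3 v
    rwa [filter_swap, Finset.sum_filter] at this
end
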